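/- Composition ∗ of Brauerian split equivalences between finite ordinals is associative: for R : m ⊢ n, P : n ⊢ k, Q : k ⊢ l Brauerian split equivalences, Q ∗ (P ∗ R) = (Q ∗ P) ∗ R. -/

import Mathlib

open Sum

/-- Embed the first split relation's carrier into the three-part disjoint union. -/
def embR {α β γ : Type} : α ⊕ β → α ⊕ (β ⊕ γ)
  | inl a => inl a
  | inr b => inr (inl b)

/-- Embed the second split relation's carrier into the three-part disjoint union. -/
def embP {α β γ : Type} : β ⊕ γ → α ⊕ (β ⊕ γ)
  | inl b => inr (inl b)
  | inr c => inr (inr c)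

/-- Embed the composite's carrier into the three-part disjoint union. -/
def embO {α β γ : Type} : α ⊕ γ → α ⊕ (β ⊕ γ)
  | inl a => inl a
  | inr c => inr (inr c)

/-- The union R^{-t} ∪ P^{-s} viewed inside the disjoint union of all three parts. -/
def unionRel {α β γ : Type} (R : α ⊕ β → α ⊕ β → Prop) (P : β ⊕ γ → β ⊕ γ → Prop)
    (x y : α ⊕ (β ⊕ γ)) : Prop :=
  (∃ u v, embR (γ := γ) u = x ∧ embR (γ := γ) v = y ∧ R u v) ∨
  (∃ u v, embP (α := α) u = x ∧ embP (α := α) v = y ∧ P u v)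

/-- The composite P ∗ R = Tr(R^{-t} ∪ P^{-s}) ∩ (X^s ∪ Z^t)². -/
def splitComp {α β γ : Type} (R : α ⊕ β → α ⊕ β → Prop) (P : β ⊕ γ → β ⊕ γ → Prop)
    (x y : α ⊕ γ) : Prop :=
  Relation.TransGen (unionRel R P) (embO (β := β) x) (embO (β := β) y)

/-- A Brauerian split equivalence: an equivalence relation all of whose classes
are two-element sets (every element has a unique partner distinct from itself). -/
def IsBrauerian {σ : Type} (R : σ → σ → Prop) : Prop :=
  Equivalence R ∧ ∀ u, ∃ v, v ≠ u ∧ R u v ∧ ∀ w, R u w → w = u ∨ w = v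

/-- The identity Brauerian split equivalence 1ₙ, with classes {kₛ, kₜ} for k < n. -/
def idBr (n : ℕ) (x y : Fin n ⊕ Fin n) : Prop :=
  Sum.elim Fin.val Fin.val x = Sum.elim Fin.val Fin.val y

/-- A two-element class {u, v} is a transversal: one source, one target element. -/
def IsTransversal {α β : Type} (u v : α ⊕ β) : Prop :=
  ∃ a b, (u = inl a ∧ v = inr b) ∨ (u = inr b ∧ v = inl a)

/-- A two-element class {u, v} is a cup: both elements on the source side. -/
def IsCup {α β : Type} (u v : α ⊕ β) : Prop :=
  ∃ a a', u = inl a ∧ v = inl a'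

/-- A two-element class {u, v} is a cap: both elements on the target side. -/
def IsCap {α β : Type} (u v : α ⊕ β) : Prop :=
  ∃ b b', u = inr b ∧ v = inr b'

namespace BrAssoc

open Sum Relation

theorem tg_map {A B : Type} {r : A → A → Prop} {s : B → B → Prop} (f : A → B)
    (h : ∀ a b, r a b → s (f a) (f b)) :
    ∀ {a b}, TransGen r a b → TransGen s (f a) (f b) := by
  intro a b htg
  induction htg with
  | single h2 => exact TransGen.single (h _ _ h2)
  | tail _ h2 ih => exact TransGen.tail ih (h _ _ h2)

theorem tg_bind {A B : Type} {r : A → A → Prop} {s : B → B → Prop} (f : A → B)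
    (h : ∀ a b, r a b → TransGen s (f a) (f b)) :
    ∀ {a b}, TransGen r a b → TransGen s (f a) (f b) := by
  intro a b htg
  induction htg with
  | single h2 => exact h _ _ h2
  | tail _ h2 ih => exact TransGen.trans ih (h _ _ h2)

theorem tg_congr {A : Type} {r s : A → A → Prop} (h : ∀ a b, r a b ↔ s a b)
    {a b : A} : TransGen r a b ↔ TransGen s a b :=
  ⟨TransGen.mono (fun _ _ hh => (h _ _).1 hh) _ _, TransGen.mono (fun _ _ hh => (h _ _).2 hh) _ _⟩

theorem unionRel_congr {α β γ : Type} {A A' : α ⊕ β → α ⊕ β → Prop}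
    {B B' : β ⊕ γ → β ⊕ γ → Prop}
    (hA : ∀ u v, A u v ↔ A' u v) (hB : ∀ u v, B u v ↔ B' u v) (x y : α ⊕ (β ⊕ γ)) :
    unionRel A B x y ↔ unionRel A' B' x y := by
  unfold unionRel
  simp only [hA, hB]

theorem splitComp_congr {α β γ : Type} {A A' : α ⊕ β → α ⊕ β → Prop}
    {B B' : β ⊕ γ → β ⊕ γ → Prop}
    (hA : ∀ u v, A u v ↔ A' u v) (hB : ∀ u v, B u v ↔ B' u v) (x y : α ⊕ γ) :
    splitComp A B x y ↔ splitComp A' B' x y :=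
  tg_congr (fun a b => unionRel_congr hA hB a b)

/-! ### Duality -/

def op {α β : Type} (A : α ⊕ β → α ⊕ β → Prop) : β ⊕ α → β ⊕ α → Prop :=
  fun u v => A (Sum.swap u) (Sum.swap v)

def sig3 {α β γ : Type} : α ⊕ (β ⊕ γ) → γ ⊕ (β ⊕ α)
  | inl a => inr (inr a)
  | inr (inl b) => inr (inl b)
  | inr (inr c) => inl c

theorem unionRel_op {α β γ : Type} (A : α ⊕ β → α ⊕ β → Prop) (B : β ⊕ γ → β ⊕ γ → Prop) :
    ∀ x y, unionRel A B x y → unionRel (op B) (op A) (sig3 x) (sig3 y) := by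
  rintro x y (⟨u, v, rfl, rfl, h⟩ | ⟨u, v, rfl, rfl, h⟩)
  · refine Or.inr ⟨Sum.swap u, Sum.swap v, ?_, ?_, ?_⟩
    · cases u <;> rfl
    · cases v <;> rfl
    · simp only [op, Sum.swap_swap]; exact h
  · refine Or.inl ⟨Sum.swap u, Sum.swap v, ?_, ?_, ?_⟩
    · cases u <;> rfl
    · cases v <;> rfl
    · simp only [op, Sum.swap_swap]; exact h

theorem splitComp_op {α β γ : Type} (A : α ⊕ β → α ⊕ β → Prop) (B : β ⊕ γ → β ⊕ γ → Prop)
    (x y : α ⊕ γ) :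
    splitComp A B x y ↔ splitComp (op B) (op A) (Sum.swap x) (Sum.swap y) := by
  have e : ∀ z : α ⊕ γ, sig3 (β := β) (embO (β := β) z) = embO (β := β) (Sum.swap z) := by
    rintro (a | c) <;> rfl
  constructor
  · intro h
    have h2 := tg_map (sig3 (α := α) (β := β) (γ := γ)) (unionRel_op A B) h
    unfold splitComp
    rw [← e x, ← e y]
    exact h2
  · intro h
    have h2 := tg_map (sig3 (α := γ) (β := β) (γ := α)) (unionRel_op (op B) (op A)) h
    have e' : ∀ z : γ ⊕ α, sig3 (β := β) (embO (β := β) z) = embO (β := β) (Sum.swap z) := by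
      rintro (c | a) <;> rfl
    rw [e' _, e' _, Sum.swap_swap, Sum.swap_swap] at h2
    unfold splitComp
    refine TransGen.mono (fun p q hpq => ?_) _ _ h2
    refine (unionRel_congr (fun u v => ?_) (fun u v => ?_) p q).1 hpq <;>
      simp only [op, Sum.swap_swap]

/-! ### The four-part union -/

section Four

variable {α β γ δ : Type}

def e1 : α ⊕ β → α ⊕ (β ⊕ (γ ⊕ δ))
  | inl a => inl a
  | inr b => inr (inl b)

def e2 : β ⊕ γ → α ⊕ (β ⊕ (γ ⊕ δ))
  | inl b => inr (inl b)
  | inr c => inr (inr (inl c))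

def e3 : γ ⊕ δ → α ⊕ (β ⊕ (γ ⊕ δ))
  | inl c => inr (inr (inl c))
  | inr d => inr (inr (inr d))

def gRP : α ⊕ (β ⊕ γ) → α ⊕ (β ⊕ (γ ⊕ δ))
  | inl a => inl a
  | inr (inl b) => inr (inl b)
  | inr (inr c) => inr (inr (inl c))

def fV : α ⊕ (γ ⊕ δ) → α ⊕ (β ⊕ (γ ⊕ δ))
  | inl a => inl a
  | inr (inl c) => inr (inr (inl c))
  | inr (inr d) => inr (inr (inr d))

def eX4 : α ⊕ δ → α ⊕ (β ⊕ (γ ⊕ δ))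
  | inl a => inl a
  | inr d => inr (inr (inr d))

variable (R : α ⊕ β → α ⊕ β → Prop) (P : β ⊕ γ → β ⊕ γ → Prop) (Q : γ ⊕ δ → γ ⊕ δ → Prop)

def Big (x y : α ⊕ (β ⊕ (γ ⊕ δ))) : Prop :=
  (∃ u v, e1 (γ := γ) (δ := δ) u = x ∧ e1 (γ := γ) (δ := δ) v = y ∧ R u v) ∨
  (∃ u v, e2 (α := α) (δ := δ) u = x ∧ e2 (α := α) (δ := δ) v = y ∧ P u v) ∨
  (∃ u v, e3 (α := α) (β := β) u = x ∧ e3 (α := α) (β := β) v = y ∧ Q u v)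

def Vis (a : α ⊕ (β ⊕ (γ ⊕ δ))) : Prop := ∃ p, fV (β := β) p = a

def Inv (a : α ⊕ (β ⊕ (γ ⊕ δ))) : Prop := ∃ b : β, a = inr (inl b)

def Out (a b : α ⊕ (β ⊕ (γ ⊕ δ))) : Prop :=
  ∃ p q, fV (β := β) p = a ∧ fV (β := β) q = b ∧
    Relation.TransGen (unionRel (splitComp R P) Q) p q

def RPp (a b : α ⊕ (β ⊕ (γ ⊕ δ))) : Prop :=
  ∃ u v, gRP (δ := δ) u = a ∧ gRP (δ := δ) v = b ∧ Relation.TransGen (unionRel R P) u v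

theorem fV_inj : Function.Injective (fV (α := α) (β := β) (γ := γ) (δ := δ)) := by
  rintro (a | (c | d)) (a' | (c' | d')) h <;> simp_all [fV]

theorem gRP_inj : Function.Injective (gRP (α := α) (β := β) (γ := γ) (δ := δ)) := by
  rintro (a | (b | c)) (a' | (b' | c')) h <;> simp_all [gRP]

theorem vis_or_inv (a : α ⊕ (β ⊕ (γ ⊕ δ))) : Vis (β := β) a ∨ Inv (β := β) a := by
  rcases a with a | (b | (c | d))
  · exact Or.inl ⟨inl a, rfl⟩
  · exact Or.inr ⟨b, rfl⟩
  · exact Or.inl ⟨inr (inl c), rfl⟩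
  · exact Or.inl ⟨inr (inr d), rfl⟩

theorem not_vis_inv {a : α ⊕ (β ⊕ (γ ⊕ δ))} (h : Vis (β := β) a) (h' : Inv (β := β) a) :
    False := by
  obtain ⟨p, rfl⟩ := h
  obtain ⟨b, hb⟩ := h'
  rcases p with a | (c | d) <;> simp [fV] at hb

variable {R P Q}

theorem out_trans {a b c : α ⊕ (β ⊕ (γ ⊕ δ))} (h1 : Out R P Q a b) (h2 : Out R P Q b c) :
    Out R P Q a c := by
  obtain ⟨p, q, rfl, rfl, t1⟩ := h1
  obtain ⟨q', r, hq', rfl, t2⟩ := h2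
  rw [fV_inj hq'] at t2
  exact ⟨p, r, rfl, rfl, t1.trans t2⟩

theorem rpp_trans {a b c : α ⊕ (β ⊕ (γ ⊕ δ))} (h1 : RPp R P a b) (h2 : RPp R P b c) :
    RPp R P a c := by
  obtain ⟨u, v, rfl, rfl, t1⟩ := h1
  obtain ⟨v', w, hv', rfl, t2⟩ := h2
  rw [gRP_inj hv'] at t2
  exact ⟨u, w, rfl, rfl, t1.trans t2⟩

theorem out_vis_l {a b : α ⊕ (β ⊕ (γ ⊕ δ))} (h : Out R P Q a b) : Vis (β := β) a := by
  obtain ⟨p, q, hp, _, _⟩ := h; exact ⟨p, hp⟩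

theorem out_vis_r {a b : α ⊕ (β ⊕ (γ ⊕ δ))} (h : Out R P Q a b) : Vis (β := β) b := by
  obtain ⟨p, q, _, hq, _⟩ := h; exact ⟨q, hq⟩

theorem vis_gRP {u : α ⊕ (β ⊕ γ)} (h : Vis (β := β) (gRP (δ := δ) u)) :
    ∃ p' : α ⊕ γ, embO (β := β) p' = u ∧
      fV (β := β) (embR (γ := δ) p') = gRP (δ := δ) u := by
  rcases u with a | (b | c)
  · exact ⟨inl a, rfl, rfl⟩
  · exact absurd ⟨b, rfl⟩ (fun h' => not_vis_inv h h')
  · exact ⟨inr c, rfl, rfl⟩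

theorem rpp_out {a b : α ⊕ (β ⊕ (γ ⊕ δ))} (h : RPp R P a b) (ha : Vis (β := β) a)
    (hb : Vis (β := β) b) : Out R P Q a b := by
  obtain ⟨u, v, rfl, rfl, path⟩ := h
  obtain ⟨p', hp1, hp2⟩ := vis_gRP ha
  obtain ⟨q', hq1, hq2⟩ := vis_gRP hb
  refine ⟨embR p', embR q', hp2, hq2, Relation.TransGen.single ?_⟩
  refine Or.inl ⟨p', q', rfl, rfl, ?_⟩
  unfold splitComp
  rw [hp1, hq1]
  exact path

theorem gRP_embR : ∀ w : α ⊕ β, gRP (δ := δ) (embR (γ := γ) w) = e1 (γ := γ) (δ := δ) w := by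
  rintro (x | x) <;> rfl

theorem gRP_embP : ∀ w : β ⊕ γ, gRP (δ := δ) (embP (α := α) w) = e2 (α := α) (δ := δ) w := by
  rintro (x | x) <;> rfl

theorem fV_inr : ∀ w : γ ⊕ δ, fV (α := α) (β := β) (inr w) = e3 (α := α) (β := β) w := by
  rintro (x | x) <;> rfl

theorem embP_eq_inr : ∀ w : γ ⊕ δ, embP (α := α) w = inr w := by
  rintro (x | x) <;> rfl

theorem fV_embR : ∀ w : α ⊕ γ,
    fV (β := β) (embR (γ := δ) w) = gRP (δ := δ) (embO (β := β) w) := by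
  rintro (x | x) <;> rfl

theorem fV_embO : ∀ w : α ⊕ δ,
    fV (β := β) (embO (β := γ) w) = eX4 (β := β) (γ := γ) w := by
  rintro (x | x) <;> rfl

theorem big_cases {a b : α ⊕ (β ⊕ (γ ⊕ δ))} (h : Big R P Q a b) :
    RPp R P a b ∨ (Vis (β := β) a ∧ Vis (β := β) b ∧ Out R P Q a b) := by
  rcases h with ⟨u, v, rfl, rfl, h⟩ | ⟨u, v, rfl, rfl, h⟩ | ⟨u, v, rfl, rfl, h⟩
  · exact Or.inl ⟨embR u, embR v, gRP_embR u, gRP_embR v,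
      Relation.TransGen.single (Or.inl ⟨u, v, rfl, rfl, h⟩)⟩
  · exact Or.inl ⟨embP u, embP v, gRP_embP u, gRP_embP v,
      Relation.TransGen.single (Or.inr ⟨u, v, rfl, rfl, h⟩)⟩
  · refine Or.inr ⟨⟨inr u, fV_inr u⟩, ⟨inr v, fV_inr v⟩,
      inr u, inr v, fV_inr u, fV_inr v, Relation.TransGen.single ?_⟩
    exact Or.inr ⟨u, v, embP_eq_inr u, embP_eq_inr v, h⟩

def Psi (a b : α ⊕ (β ⊕ (γ ⊕ δ))) : Prop :=
  (Vis (β := β) a → Vis (β := β) b → Out R P Q a b) ∧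
  (Vis (β := β) a → Inv (β := β) b →
    ∃ c, Vis (β := β) c ∧ (c = a ∨ Out R P Q a c) ∧ RPp R P c b) ∧
  (Inv (β := β) a → Vis (β := β) b →
    ∃ c, Vis (β := β) c ∧ RPp R P a c ∧ (c = b ∨ Out R P Q c b)) ∧
  (Inv (β := β) a → Inv (β := β) b →
    (RPp R P a b ∨ ∃ c d, Vis (β := β) c ∧ Vis (β := β) d ∧ RPp R P a c ∧
      (c = d ∨ Out R P Q c d) ∧ RPp R P d b))

theorem big_psi : ∀ a b : α ⊕ (β ⊕ (γ ⊕ δ)),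
    Relation.TransGen (Big R P Q) a b → Psi (R := R) (P := P) (Q := Q) a b := by
  intro a b h
  induction h using Relation.TransGen.head_induction_on with
  | @single aa hab =>
    rcases big_cases hab with r | ⟨hva, hvb, hout⟩
    · exact ⟨fun hva hvb => rpp_out r hva hvb,
        fun hva _ => ⟨_, hva, Or.inl rfl, r⟩,
        fun _ hvb => ⟨_, hvb, r, Or.inl rfl⟩,
        fun _ _ => Or.inl r⟩
    · exact ⟨fun _ _ => hout,
        fun _ hib => (not_vis_inv hvb hib).elim,
        fun hia _ => (not_vis_inv hva hia).elim,
        fun hia _ => (not_vis_inv hva hia).elim⟩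
  | @head aa aa' haa' _ ih =>
    rcases big_cases haa' with r | ⟨hva, hva', hout⟩
    · rcases vis_or_inv (β := β) _ with hva' | hia'
      · -- a' visible
        refine ⟨?_, ?_, ?_, ?_⟩
        · intro hva hvb
          exact out_trans (rpp_out r hva hva') (ih.1 hva' hvb)
        · intro hva hib
          obtain ⟨c, hvc, hco, hcb⟩ := ih.2.1 hva' hib
          rcases hco with rfl | o
          · exact ⟨_, hva, Or.inl rfl, rpp_trans r hcb⟩
          · exact ⟨c, hvc, Or.inr (out_trans (rpp_out r hva hva') o), hcb⟩
        · intro _ hvb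
          exact ⟨_, hva', r, Or.inr (ih.1 hva' hvb)⟩
        · intro _ hib
          obtain ⟨c, hvc, hco, hcb⟩ := ih.2.1 hva' hib
          rcases hco with rfl | o
          · exact Or.inl (rpp_trans r hcb)
          · exact Or.inr ⟨_, c, hva', hvc, r, Or.inr o, hcb⟩
      · -- a' invisible
        refine ⟨?_, ?_, ?_, ?_⟩
        · intro hva hvb
          obtain ⟨c, hvc, hac, hcb⟩ := ih.2.2.1 hia' hvb
          have o1 : Out R P Q _ c := rpp_out (rpp_trans r hac) hva hvc
          rcases hcb with rfl | o
          · exact o1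
          · exact out_trans o1 o
        · intro hva hib
          rcases ih.2.2.2 hia' hib with rp | ⟨c, d, hvc, hvd, h1, h2, h3⟩
          · exact ⟨_, hva, Or.inl rfl, rpp_trans r rp⟩
          · have oac : Out R P Q _ c := rpp_out (rpp_trans r h1) hva hvc
            have oad : Out R P Q aa d := by
              rcases h2 with rfl | o
              · exact oac
              · exact out_trans oac o
            exact ⟨d, hvd, Or.inr oad, h3⟩
        · intro _ hvb
          obtain ⟨c, hvc, hac, hcb⟩ := ih.2.2.1 hia' hvb
          exact ⟨c, hvc, rpp_trans r hac, hcb⟩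
        · intro _ hib
          rcases ih.2.2.2 hia' hib with rp | ⟨c, d, hvc, hvd, h1, h2, h3⟩
          · exact Or.inl (rpp_trans r rp)
          · exact Or.inr ⟨c, d, hvc, hvd, rpp_trans r h1, h2, h3⟩
    · refine ⟨?_, ?_, ?_, ?_⟩
      · intro _ hvb
        exact out_trans hout (ih.1 hva' hvb)
      · intro _ hib
        obtain ⟨c, hvc, hco, hcb⟩ := ih.2.1 hva' hib
        have o : Out R P Q aa c := by
          rcases hco with rfl | o
          · exact hout
          · exact out_trans hout o
        exact ⟨c, hvc, Or.inr o, hcb⟩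
      · intro hia _
        exact (not_vis_inv hva hia).elim
      · intro hia _
        exact (not_vis_inv hva hia).elim

theorem union_to_big : ∀ w z : α ⊕ (β ⊕ γ), unionRel R P w z →
    Big R P Q (gRP (δ := δ) w) (gRP (δ := δ) z) := by
  rintro w z (⟨u, v, rfl, rfl, h⟩ | ⟨u, v, rfl, rfl, h⟩)
  · exact Or.inl ⟨u, v, (gRP_embR u).symm, (gRP_embR v).symm, h⟩
  · exact Or.inr (Or.inl ⟨u, v, (gRP_embP u).symm, (gRP_embP v).symm, h⟩)

theorem outer_to_big : ∀ p q : α ⊕ (γ ⊕ δ), unionRel (splitComp R P) Q p q →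
    Relation.TransGen (Big R P Q) (fV (β := β) p) (fV (β := β) q) := by
  rintro p q (⟨u, v, rfl, rfl, h⟩ | ⟨u, v, rfl, rfl, h⟩)
  · have h2 := tg_map (gRP (α := α) (β := β) (γ := γ) (δ := δ))
      (union_to_big (Q := Q)) h
    rw [fV_embR u, fV_embR v]
    exact h2
  · refine Relation.TransGen.single (Or.inr (Or.inr ⟨u, v, ?_, ?_, h⟩))
    · rw [embP_eq_inr u, fV_inr u]
    · rw [embP_eq_inr v, fV_inr v]

theorem lemL (x y : α ⊕ δ) :
    splitComp (splitComp R P) Q x y ↔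
      Relation.TransGen (Big R P Q) (eX4 (β := β) (γ := γ) x) (eX4 (β := β) (γ := γ) y) := by
  constructor
  · intro h
    have h2 := tg_bind (fV (α := α) (β := β) (γ := γ) (δ := δ)) outer_to_big h
    rwa [fV_embO x, fV_embO y] at h2
  · intro h
    have psi := big_psi _ _ h
    have hx : Vis (β := β) (eX4 (β := β) (γ := γ) x) := ⟨embO x, fV_embO x⟩
    have hy : Vis (β := β) (eX4 (β := β) (γ := γ) y) := ⟨embO y, fV_embO y⟩
    obtain ⟨p, q, hp, hq, path⟩ := psi.1 hx hy
    have hp' : p = embO (β := γ) x := fV_inj (hp.trans (fV_embO x).symm)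
    have hq' : q = embO (β := γ) y := fV_inj (hq.trans (fV_embO y).symm)
    rw [hp', hq'] at path
    exact path

def tau : α ⊕ (β ⊕ (γ ⊕ δ)) → δ ⊕ (γ ⊕ (β ⊕ α))
  | inl a => inr (inr (inr a))
  | inr (inl b) => inr (inr (inl b))
  | inr (inr (inl c)) => inr (inl c)
  | inr (inr (inr d)) => inl d

theorem big_op : ∀ x y, Big R P Q x y →
    Big (op Q) (op P) (op R) (tau x) (tau y) := by
  rintro x y (⟨u, v, rfl, rfl, h⟩ | ⟨u, v, rfl, rfl, h⟩ | ⟨u, v, rfl, rfl, h⟩)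
  · refine Or.inr (Or.inr ⟨Sum.swap u, Sum.swap v, ?_, ?_, ?_⟩)
    · cases u <;> rfl
    · cases v <;> rfl
    · simp only [op, Sum.swap_swap]; exact h
  · refine Or.inr (Or.inl ⟨Sum.swap u, Sum.swap v, ?_, ?_, ?_⟩)
    · cases u <;> rfl
    · cases v <;> rfl
    · simp only [op, Sum.swap_swap]; exact h
  · refine Or.inl ⟨Sum.swap u, Sum.swap v, ?_, ?_, ?_⟩
    · cases u <;> rfl
    · cases v <;> rfl
    · simp only [op, Sum.swap_swap]; exact h

theorem tau_tau : ∀ a : α ⊕ (β ⊕ (γ ⊕ δ)), tau (tau a) = a := by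
  rintro (a | (b | (c | d))) <;> rfl

theorem big_congr {R' : α ⊕ β → α ⊕ β → Prop} {P' : β ⊕ γ → β ⊕ γ → Prop}
    {Q' : γ ⊕ δ → γ ⊕ δ → Prop} (hR : ∀ u v, R u v ↔ R' u v) (hP : ∀ u v, P u v ↔ P' u v)
    (hQ : ∀ u v, Q u v ↔ Q' u v) (x y : α ⊕ (β ⊕ (γ ⊕ δ))) :
    Big R P Q x y ↔ Big R' P' Q' x y := by
  unfold Big
  simp only [hR, hP, hQ]

theorem tg_big_op {a b : α ⊕ (β ⊕ (γ ⊕ δ))} :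
    Relation.TransGen (Big R P Q) a b ↔
      Relation.TransGen (Big (op Q) (op P) (op R)) (tau a) (tau b) := by
  constructor
  · exact tg_map tau big_op
  · intro h
    have h2 := tg_map (tau (α := δ) (β := γ) (γ := β) (δ := α)) big_op h
    rw [tau_tau, tau_tau] at h2
    refine Relation.TransGen.mono (fun p q hpq => ?_) _ _ h2
    refine (big_congr (fun u v => ?_) (fun u v => ?_) (fun u v => ?_) p q).1 hpq <;>
      simp only [op, Sum.swap_swap]

theorem tau_eX4 : ∀ z : α ⊕ δ,
    tau (eX4 (β := β) (γ := γ) z) = eX4 (β := γ) (γ := β) (Sum.swap z) := by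
  rintro (a | d) <;> rfl

theorem op_splitComp {β' γ' δ' : Type} (P : β' ⊕ γ' → β' ⊕ γ' → Prop)
    (Q : γ' ⊕ δ' → γ' ⊕ δ' → Prop) (u v : δ' ⊕ β') :
    op (splitComp P Q) u v ↔ splitComp (op Q) (op P) u v := by
  have := splitComp_op P Q (Sum.swap u) (Sum.swap v)
  rw [Sum.swap_swap, Sum.swap_swap] at this
  exact this

end Four

end BrAssoc

/-- composition of Brauerian split equivalences is associative. -/
theorem splitComp_assoc {m n k l : ℕ}
    (R : Fin m ⊕ Fin n → Fin m ⊕ Fin n → Prop)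
    (P : Fin n ⊕ Fin k → Fin n ⊕ Fin k → Prop)
    (Q : Fin k ⊕ Fin l → Fin k ⊕ Fin l → Prop)
    (hR : IsBrauerian R) (hP : IsBrauerian P) (hQ : IsBrauerian Q) :
    ∀ x y, splitComp (splitComp R P) Q x y ↔ splitComp R (splitComp P Q) x y := by
  intro x y
  have e1 := BrAssoc.lemL (R := R) (P := P) (Q := Q) x y
  have e2 := BrAssoc.splitComp_op R (splitComp P Q) x y
  have e3 := BrAssoc.splitComp_congr (B := BrAssoc.op R) (B' := BrAssoc.op R)
      (BrAssoc.op_splitComp P Q) (fun _ _ => Iff.rfl) (Sum.swap x) (Sum.swap y)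
  have e4 := BrAssoc.lemL (R := BrAssoc.op Q) (P := BrAssoc.op P) (Q := BrAssoc.op R)
      (Sum.swap x) (Sum.swap y)
  have e5 := BrAssoc.tg_big_op (R := R) (P := P) (Q := Q)
      (a := BrAssoc.eX4 x) (b := BrAssoc.eX4 y)
  rw [BrAssoc.tau_eX4 x, BrAssoc.tau_eX4 y] at e5
  exact e1.trans (e5.trans (e4.symm.trans (e3.symm.trans e2.symm)))
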